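/- For every integer r ≥ 0 and every real x ≥ 0, h_r(x) ≤ exp(2√(rx)), where h_r(x) = Σ_{k=0}^{r} (1/k!)·C(r-1, k-1)·x^k (with h_0 = 1). -/

import Mathlib

/-- `h_r(x) ≤ exp(2√(rx))` for `x ≥ 0`, where
`h_r(x) = Σ_{k=1}^r (1/k!) C(r-1,k-1) x^k` (and `h_0 = 1`). -/
theorem h_exp_bound (r : ℕ) (x : ℝ) (hx : 0 ≤ x) :
    (if r = 0 then (1 : ℝ)
      else ∑ k ∈ Finset.Icc 1 r,
        (1 / (k.factorial : ℝ)) * ((r - 1).choose (k - 1) : ℝ) * x ^ k)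
      ≤ Real.exp (2 * Real.sqrt (r * x)) := by
  rcases eq_or_ne r 0 with hr | hr
  · simp [hr, Real.one_le_exp (by positivity : (0:ℝ) ≤ 2 * Real.sqrt ((0:ℕ) * x))]
  rw [if_neg hr]
  set s := Real.sqrt (r * x) with hs
  have hs0 : 0 ≤ s := Real.sqrt_nonneg _
  have hsq : s ^ 2 = r * x := Real.sq_sqrt (by positivity)
  -- step 1: termwise bound
  have step1 : ∑ k ∈ Finset.Icc 1 r,
      (1 / (k.factorial : ℝ)) * ((r - 1).choose (k - 1) : ℝ) * x ^ k
      ≤ ∑ k ∈ Finset.Icc 1 r, (s ^ k / k.factorial) ^ 2 := by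
    apply Finset.sum_le_sum
    intro k hk
    have hk1 : 1 ≤ k := (Finset.mem_Icc.mp hk).1
    have hchoose : ((r - 1).choose (k - 1) : ℝ) ≤ (r.choose k : ℝ) := by
      have : (r - 1).choose (k - 1) ≤ r.choose k := by
        obtain ⟨r', rfl⟩ := Nat.exists_eq_succ_of_ne_zero hr
        obtain ⟨k', rfl⟩ := Nat.exists_eq_add_of_le hk1
        simp only [Nat.succ_sub_one, Nat.add_comm 1 k']
        rw [Nat.choose_succ_succ]
        omega
      exact_mod_cast this
    have hpow : (r.choose k : ℝ) ≤ (r : ℝ) ^ k / k.factorial :=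
      Nat.choose_le_pow_div k r
    have hkf : (0 : ℝ) < k.factorial := by exact_mod_cast k.factorial_pos
    have : (s ^ k / k.factorial) ^ 2 = (r : ℝ) ^ k * x ^ k / (k.factorial * k.factorial) := by
      rw [div_pow, ← pow_mul, mul_comm k 2, pow_mul, hsq, mul_pow, sq]
    rw [this]
    rw [div_mul_eq_mul_div, one_mul, div_mul_eq_mul_div]
    rw [div_le_div_iff₀ hkf (by positivity)]
    calc ((r - 1).choose (k - 1) : ℝ) * x ^ k * (↑k.factorial * ↑k.factorial)
        ≤ ((r : ℝ) ^ k / k.factorial) * x ^ k * (↑k.factorial * ↑k.factorial) := by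
          apply mul_le_mul_of_nonneg_right (mul_le_mul_of_nonneg_right
            (hchoose.trans hpow) (by positivity)) (by positivity)
      _ = (r : ℝ) ^ k * x ^ k * ↑k.factorial := by
          field_simp
  refine step1.trans ?_
  -- step 2: sum of squares ≤ square of sum over range (r+1)
  have step2 : ∑ k ∈ Finset.Icc 1 r, (s ^ k / k.factorial) ^ 2
      ≤ (∑ k ∈ Finset.range (r + 1), s ^ k / k.factorial) ^ 2 := by
    calc ∑ k ∈ Finset.Icc 1 r, (s ^ k / k.factorial) ^ 2
        ≤ ∑ k ∈ Finset.range (r + 1), (s ^ k / k.factorial) ^ 2 := by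
          apply Finset.sum_le_sum_of_subset_of_nonneg
          · intro k hk
            simp only [Finset.mem_Icc] at hk
            simp only [Finset.mem_range]; omega
          · intros; positivity
      _ ≤ (∑ k ∈ Finset.range (r + 1), s ^ k / k.factorial) ^ 2 :=
          Finset.sum_sq_le_sq_sum_of_nonneg (fun i _ => by positivity)
  refine step2.trans ?_
  have step3 : ∑ k ∈ Finset.range (r + 1), s ^ k / k.factorial ≤ Real.exp s :=
    Real.sum_le_exp_of_nonneg hs0 _
  calc (∑ k ∈ Finset.range (r + 1), s ^ k / k.factorial) ^ 2
      ≤ (Real.exp s) ^ 2 := by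
        apply pow_le_pow_left₀ (Finset.sum_nonneg fun i _ => by positivity) step3
    _ = Real.exp (2 * s) := by rw [← Real.exp_nat_mul]; norm_num
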